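/- Let G = (V, E) be a finite weighted directed graph with weights in a unital quantale Σ, T a tree decomposition of G, u, v ∈ V, and B_1, B_2, …, B_j a simple path of bags in T such that u ∈ B_1 and v ∈ B_j. Let A = {u} × Π_{1 < i ≤ j} (B_{i−1} ∩ B_i) × {v}, i.e. the set of tuples (x_1, …, x_{j+1}) with x_1 = u, x_{j+1} = v, and x_i ∈ B_{i−1} ∩ B_i for every 1 < i ≤ j. Then d(u, v) = ⨆_{(x_1, …, x_{j+1}) ∈ A} ⊗_{i=1}^{j} d(x_i, x_{i+1}). -/

import Mathlib

set_option linter.unusedSectionVars false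
set_option linter.unusedVariables false


/-- A path from `u` to `v` in the directed graph with edge relation `E`. -/
def IsPath {V : Type*} (E : V → V → Prop) (u v : V) (l : List V) : Prop :=
  l ≠ [] ∧ l.head? = some u ∧ l.getLast? = some v ∧ l.Chain' E

/-- The weight of a path: the ordered product of the weights of its edges,
`1` for a 0-length path. -/
def pathWeight {V M : Type*} [Monoid M] (wt : V → V → M) (l : List V) : M :=
  ((l.zip l.tail).map fun p => wt p.1 p.2).prod

/-- The algebraic distance: supremum of the weights of all paths from `u` to `v`. -/
def gdist {V Q : Type*} [CompleteLattice Q] [Monoid Q]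
    (E : V → V → Prop) (wt : V → V → Q) (u v : V) : Q :=
  ⨆ l ∈ {l : List V | IsPath E u v l}, pathWeight wt l

/-- A tree decomposition of the graph with node set `V` and edge relation `E`. -/
structure TreeDecomp (V : Type*) (E : V → V → Prop) (ι : Type*) where
  T : SimpleGraph ι
  isTree : T.IsTree
  bag : ι → Set V
  covers_nodes : ∀ v, ∃ i, v ∈ bag i
  covers_edges : ∀ u v, E u v → ∃ i, u ∈ bag i ∧ v ∈ bag i
  bags_connected : ∀ v, (T.induce {i | v ∈ bag i}).Connected

section QH
variable {Q : Type*} [CompleteLattice Q] [Monoid Q]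
  (hdl : ∀ (a : Q) (S : Set Q), a * sSup S = ⨆ s ∈ S, a * s)
  (hdr : ∀ (a : Q) (S : Set Q), sSup S * a = ⨆ s ∈ S, s * a)

include hdl hdr in
lemma q_mul_iSup {α : Sort*} (a : Q) (f : α → Q) : a * (⨆ i, f i) = ⨆ i, a * f i := by
  rw [iSup, hdl a, iSup_range]

include hdl hdr in
lemma q_iSup_mul {α : Sort*} (a : Q) (f : α → Q) : (⨆ i, f i) * a = ⨆ i, f i * a := by
  rw [iSup, hdr a, iSup_range]

include hdl hdr in
lemma q_mul_le_mul_left {a b : Q} (c : Q) (h : a ≤ b) : c * a ≤ c * b := by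
  have h2 : sSup {a, b} = b := by rw [sSup_pair, sup_eq_right.2 h]
  have := hdl c {a, b}
  rw [h2] at this
  rw [this]
  exact le_iSup₂ (f := fun s (_ : s ∈ ({a,b}:Set Q)) => c * s) a (Set.mem_insert a {b})

include hdl hdr in
lemma q_mul_le_mul_right {a b : Q} (c : Q) (h : a ≤ b) : a * c ≤ b * c := by
  have h2 : sSup {a, b} = b := by rw [sSup_pair, sup_eq_right.2 h]
  have := hdr c {a, b}
  rw [h2] at this
  rw [this]
  exact le_iSup₂ (f := fun s (_ : s ∈ ({a,b}:Set Q)) => s * c) a (Set.mem_insert a {b})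

include hdl hdr in
lemma q_mul_le_mul {a b c d : Q} (h1 : a ≤ b) (h2 : c ≤ d) : a * c ≤ b * d :=
  le_trans (q_mul_le_mul_right hdl hdr c h1) (q_mul_le_mul_left hdl hdr b h2)

end QH

section PW
variable {V M : Type*} [Monoid M] (wt : V → V → M)


lemma pw_single (a : V) : pathWeight wt [a] = 1 := by simp [pathWeight]

lemma pw_cons_cons (a b : V) (l : List V) :
    pathWeight wt (a :: b :: l) = wt a b * pathWeight wt (b :: l) := by
  simp [pathWeight]

lemma pw_append (x : V) (t : List V) :
    ∀ s : List V, pathWeight wt (s ++ x :: t) = pathWeight wt (s ++ [x]) * pathWeight wt (x :: t)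
  | [] => by simp [pw_single]
  | [a] => by simp [pw_cons_cons, pw_single]
  | a :: b :: s' => by
    have := pw_append x t (b :: s')
    simp only [List.cons_append] at this ⊢
    rw [pw_cons_cons, pw_cons_cons, this, mul_assoc]

end PW

section GD
variable {V Q : Type*} [CompleteLattice Q] [Monoid Q]
  (hdl : ∀ (a : Q) (S : Set Q), a * sSup S = ⨆ s ∈ S, a * s)
  (hdr : ∀ (a : Q) (S : Set Q), sSup S * a = ⨆ s ∈ S, s * a)
  (E : V → V → Prop) (wt : V → V → Q)

lemma le_gdist {u v : V} {l : List V} (h : IsPath E u v l) :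
    pathWeight wt l ≤ gdist E wt u v :=
  le_iSup₂ (f := fun l (_ : l ∈ {l : List V | IsPath E u v l}) => pathWeight wt l) l h

lemma one_le_gdist_self (a : V) : 1 ≤ gdist E wt a a := by
  have h : IsPath E a a [a] := ⟨by simp, by simp, by simp, List.isChain_singleton a⟩
  have := le_gdist E wt h
  rwa [pw_single] at this

include hdl hdr in
lemma gdist_trans (a c b : V) : gdist E wt a c * gdist E wt c b ≤ gdist E wt a b := by
  rw [gdist, gdist]
  simp only [q_iSup_mul hdl hdr, q_mul_iSup hdl hdr]
  refine iSup₂_le fun l1 h1 => iSup₂_le fun l2 h2 => ?_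
  simp only [Set.mem_setOf_eq] at h1 h2
  obtain ⟨hne1, hh1, hl1, hc1⟩ := h1
  obtain ⟨hne2, hh2, hl2, hc2⟩ := h2
  obtain ⟨t2, rfl⟩ : ∃ t2, l2 = c :: t2 := by
    cases l2 with
    | nil => exact absurd rfl hne2
    | cons x t => simp only [List.head?_cons, Option.some_inj] at hh2; rw [hh2]; exact ⟨t, rfl⟩
  have hl1' : l1.getLast hne1 = c := by
    rwa [List.getLast?_eq_getLast hne1, Option.some_inj] at hl1
  have hdec : l1.dropLast ++ [c] = l1 := by
    rw [← hl1']; exact List.dropLast_append_getLast hne1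
  have key : IsPath E a b (l1.dropLast ++ c :: t2) := by
    refine ⟨by simp, ?_, ?_, ?_⟩
    · cases h : l1.dropLast with
      | nil =>
        have : l1 = [c] := by rw [← hdec, h]; rfl
        rw [this] at hh1
        simpa [h] using hh1
      | cons d s =>
        rw [← hdec, h] at hh1
        simp at hh1 ⊢
        simpa using hh1
    · rw [List.getLast?_append_cons]
      exact hl2
    · have heq : l1.dropLast ++ c :: t2 = (l1.dropLast ++ [c]) ++ t2 := by simp
      rw [heq, hdec, List.Chain', List.isChain_append]
      refine ⟨hc1, List.IsChain.tail hc2, fun x hx y hy => ?_⟩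
      rw [hl1] at hx
      have hxc : c = x := by simpa using hx
      subst hxc
      rw [List.Chain', List.isChain_cons] at hc2
      exact hc2.1 y hy
  calc pathWeight wt l1 * pathWeight wt (c :: t2)
      = pathWeight wt (l1.dropLast ++ [c]) * pathWeight wt (c :: t2) := by rw [hdec]
    _ = pathWeight wt (l1.dropLast ++ c :: t2) := (pw_append wt c t2 l1.dropLast).symm
    _ ≤ gdist E wt a b := le_gdist E wt key

include hdl hdr in
lemma pw_le_gdist (xs : List V) : ∀ (a b : V), xs.head? = some a → xs.getLast? = some b →
    pathWeight (gdist E wt) xs ≤ gdist E wt a b := by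
  induction xs with
  | nil => intro a b h _; simp at h
  | cons x t ih =>
    intro a b h h'
    obtain rfl : x = a := by simpa using h
    cases t with
    | nil =>
      have hb : b = x := by simpa using h'.symm
      rw [pw_single, hb]
      exact one_le_gdist_self E wt x
    | cons y t' =>
      rw [List.getLast?_cons_cons] at h'
      have hih := ih y b rfl h'
      rw [pw_cons_cons]
      exact le_trans (q_mul_le_mul_left hdl hdr _ hih) (gdist_trans hdl hdr E wt x y b)

end GD

section Cross
variable {V : Type*} {E : V → V → Prop} {L R : Set V}

lemma cross_list (hLR : ∀ y : V, y ∈ L ∪ R)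
    (hedge : ∀ a b, E a b → (a ∈ L ∧ b ∈ L) ∨ (a ∈ R ∧ b ∈ R)) :
    ∀ (l : List V) (a : V), l.head? = some a → a ∈ L →
      (∀ b, l.getLast? = some b → b ∈ R) → l.Chain' E →
      ∃ (l1 l2 : List V) (x : V), l1.head? = some a ∧ l1.getLast? = some x ∧ l2.head? = some x ∧
        l2.getLast? = l.getLast? ∧ l1 ++ l2.tail = l ∧ x ∈ L ∩ R ∧
        l1.Chain' E ∧ l2.Chain' E := by
  intro l
  induction l with
  | nil => intro a h; simp at h
  | cons a0 t ih =>
    intro a h haL hR hc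
    obtain rfl : a0 = a := by simpa using h
    by_cases haR : a0 ∈ R
    · exact ⟨[a0], a0 :: t, a0, rfl, rfl, rfl, rfl, rfl, ⟨haL, haR⟩, List.isChain_singleton a0, hc⟩
    · cases t with
      | nil =>
        exact absurd (hR a0 (by simp)) haR
      | cons b t' =>
        have hEab : E a0 b := (List.isChain_cons_cons.mp hc).1
        have hbL : b ∈ L := by
          rcases hedge a0 b hEab with ⟨_, h2⟩ | ⟨h1, _⟩
          · exact h2
          · exact absurd h1 haR
        have hct : (b :: t').Chain' E := (List.isChain_cons_cons.mp hc).2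
        have hRt : ∀ b', (b :: t').getLast? = some b' → b' ∈ R := by
          intro b' hb'
          exact hR b' (by rwa [List.getLast?_cons_cons])
        obtain ⟨l1, l2, x, hh1, hl1, hh2, hl2, happ, hx, hc1, hc2⟩ :=
          ih b rfl hbL hRt hct
        obtain ⟨c1, s1, rfl⟩ : ∃ c1 s1, l1 = c1 :: s1 := by
          cases l1 with
          | nil => simp at hh1
          | cons c1 s1 => exact ⟨c1, s1, rfl⟩
        obtain rfl : c1 = b := by simpa using hh1
        refine ⟨a0 :: c1 :: s1, l2, x, rfl, ?_, hh2, ?_, ?_, hx, ?_, hc2⟩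
        · rwa [List.getLast?_cons_cons]
        · rw [hl2, List.getLast?_cons_cons]
        · rw [List.cons_append]
          rw [List.cons_append] at happ ⊢
          rw [happ]
        · exact List.isChain_cons_cons.mpr ⟨hEab, hc1⟩
  end Cross

section Tree
open SimpleGraph

lemma walk_edge_of_cross {ι : Type*} {T : SimpleGraph ι} {i1 i2 a b : ι} (W : T.Walk a b)
    (ha : (T.deleteEdges {s(i1, i2)}).Reachable i1 a)
    (hb : ¬(T.deleteEdges {s(i1, i2)}).Reachable i1 b) :
    s(i1, i2) ∈ W.edges := by
  by_contra h
  refine hb (ha.trans ⟨W.toDeleteEdges {s(i1, i2)} fun e he hs => ?_⟩)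
  rw [Set.mem_singleton_iff] at hs
  exact h (hs ▸ he)

lemma bag_sep {V ι : Type*} {E : V → V → Prop} (td : TreeDecomp V E ι) {i1 i2 : ι} (x : V)
    {a b : ι} (ha : (td.T.deleteEdges {s(i1, i2)}).Reachable i1 a) (hxa : x ∈ td.bag a)
    (hb : ¬(td.T.deleteEdges {s(i1, i2)}).Reachable i1 b) (hxb : x ∈ td.bag b) :
    x ∈ td.bag i1 ∩ td.bag i2 := by
  obtain ⟨W0⟩ := (td.bags_connected x) ⟨a, hxa⟩ ⟨b, hxb⟩
  set W := W0.map (SimpleGraph.Embedding.induce {i | x ∈ td.bag i}).toHom with hW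
  have hedge : s(i1, i2) ∈ W.edges := walk_edge_of_cross W ha hb
  have h1 : i1 ∈ W.support := W.fst_mem_support_of_mem_edges hedge
  have h2 : i2 ∈ W.support := W.snd_mem_support_of_mem_edges hedge
  rw [hW, Walk.support_map] at h1 h2
  constructor
  · obtain ⟨c, _, hci⟩ := List.mem_map.mp h1
    have hc := c.property
    simp only [Set.mem_setOf_eq] at hc
    exact hci ▸ hc
  · obtain ⟨c, _, hci⟩ := List.mem_map.mp h2
    have hc := c.property
    simp only [Set.mem_setOf_eq] at hc
    exact hci ▸ hc

end Tree

section Key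
open SimpleGraph

lemma key_lemma {V ι Q : Type*} [CompleteLattice Q] [Monoid Q]
    (hdl : ∀ (a : Q) (S : Set Q), a * sSup S = ⨆ s ∈ S, a * s)
    (hdr : ∀ (a : Q) (S : Set Q), sSup S * a = ⨆ s ∈ S, s * a)
    (E : V → V → Prop) (wt : V → V → Q) (td : TreeDecomp V E ι) :
    ∀ {i1 ij : ι} (p : td.T.Walk i1 ij), p.IsPath → ∀ u v : V, u ∈ td.bag i1 → v ∈ td.bag ij →
    ∀ l, IsPath E u v l →
    ∃ xs : List V,
      (xs.length = p.support.length + 1 ∧ xs.head? = some u ∧ xs.getLast? = some v ∧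
       ∀ k, 1 ≤ k → k < p.support.length →
         xs.getD k u ∈ td.bag (p.support.getD (k - 1) i1) ∩ td.bag (p.support.getD k i1)) ∧
      pathWeight wt l ≤ pathWeight (gdist E wt) xs := by
  intro i1 ij p
  induction p with
  | nil =>
    intro _ u v hu hv l hl
    refine ⟨[u, v], ⟨by simp, rfl, rfl, ?_⟩, ?_⟩
    · intro k hk1 hk2
      simp only [Walk.support_nil, List.length_singleton] at hk2
      omega
    · rw [pw_cons_cons, pw_single, mul_one]
      exact le_gdist E wt hl
  | cons hadj q ihq =>
    rename_i i1 i2 ij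
    intro hp u v hu hv l hl
    rw [Walk.cons_isPath_iff] at hp
    obtain ⟨hq, hi1⟩ := hp
    have hbridge : ¬(td.T.deleteEdges {s(i1, i2)}).Reachable i1 i2 := by
      have hb := isAcyclic_iff_forall_adj_isBridge.mp td.isTree.2 hadj
      have h2 := isBridge_iff.mp hb
      simpa [deleteEdges] using h2
    have hq_edges : s(i1, i2) ∉ q.edges := fun hmem => hi1 (q.fst_mem_support_of_mem_edges hmem)
    have hij : ¬(td.T.deleteEdges {s(i1, i2)}).Reachable i1 ij := by
      intro hr
      have h2ij : (td.T.deleteEdges {s(i1, i2)}).Reachable i2 ij :=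
        ⟨q.toDeleteEdges _ fun e he hs => by
          rw [Set.mem_singleton_iff] at hs; exact hq_edges (hs ▸ he)⟩
      exact hbridge (hr.trans h2ij.symm)
    set L := {x : V | ∃ i, (td.T.deleteEdges {s(i1, i2)}).Reachable i1 i ∧ x ∈ td.bag i} with hLdef
    set R := {x : V | ∃ i, ¬(td.T.deleteEdges {s(i1, i2)}).Reachable i1 i ∧ x ∈ td.bag i} with hRdef
    obtain ⟨hne, hh, hlast, hchain⟩ := hl
    have hLR : ∀ y : V, y ∈ L ∪ R := by
      intro y
      obtain ⟨i, hi⟩ := td.covers_nodes y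
      by_cases hri : (td.T.deleteEdges {s(i1, i2)}).Reachable i1 i
      · exact Or.inl ⟨i, hri, hi⟩
      · exact Or.inr ⟨i, hri, hi⟩
    have hedge : ∀ a b, E a b → (a ∈ L ∧ b ∈ L) ∨ (a ∈ R ∧ b ∈ R) := by
      intro a b hab
      obtain ⟨i, h1, h2⟩ := td.covers_edges a b hab
      by_cases hri : (td.T.deleteEdges {s(i1, i2)}).Reachable i1 i
      · exact Or.inl ⟨⟨i, hri, h1⟩, ⟨i, hri, h2⟩⟩
      · exact Or.inr ⟨⟨i, hri, h1⟩, ⟨i, hri, h2⟩⟩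
    have hvR : ∀ b, l.getLast? = some b → b ∈ R := by
      intro b hb
      rw [hlast, Option.some_inj] at hb
      exact hb ▸ ⟨ij, hij, hv⟩
    obtain ⟨l1, l2, x, hh1, hl1, hh2, hl2, happ, hx, hc1, hc2⟩ :=
      cross_list hLR hedge l u hh ⟨i1, Reachable.refl i1, hu⟩ hvR hchain
    have hxbags : x ∈ td.bag i1 ∩ td.bag i2 := by
      obtain ⟨⟨ia, hia, hxa⟩, ⟨ib, hib, hxb⟩⟩ := hx
      exact bag_sep td x hia hxa hib hxb
    have hne2 : l2 ≠ [] := fun h0 => by simp [h0] at hh2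
    have hl2path : IsPath E x v l2 := ⟨hne2, hh2, by rw [hl2, hlast], hc2⟩
    obtain ⟨xs', ⟨hlen', hh', hl', hcond'⟩, hle'⟩ := ihq hq x v hxbags.2 hv l2 hl2path
    obtain ⟨x0, t, rfl⟩ : ∃ x0 t, xs' = x0 :: t := by
      cases xs' with
      | nil => simp at hh'
      | cons x0 t => exact ⟨x0, t, rfl⟩
    obtain rfl : x0 = x := by simpa using hh'
    have hsupc : (Walk.cons hadj q).support = i1 :: q.support := Walk.support_cons hadj q
    refine ⟨u :: x0 :: t, ⟨?_, rfl, ?_, ?_⟩, ?_⟩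
    · rw [hsupc]
      simp only [List.length_cons] at hlen' ⊢
      omega
    · rw [List.getLast?_cons_cons]
      exact hl'
    · intro k hk1 hk2
      rw [hsupc] at hk2 ⊢
      obtain ⟨k', rfl⟩ : ∃ k', k = k' + 1 := ⟨k - 1, by omega⟩
      simp only [List.length_cons] at hk2
      rw [List.getD_cons_succ, Nat.add_sub_cancel, List.getD_cons_succ]
      cases k' with
      | zero =>
        rw [List.getD_cons_zero, List.getD_cons_zero]
        rw [q.support_eq_cons, List.getD_cons_zero]
        exact hxbags
      | succ k'' =>
        have hk'' : k'' + 1 < q.support.length := by omega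
        have hcc := hcond' (k'' + 1) (by omega) hk''
        rw [List.getD_cons_succ] at hcc ⊢
        rw [Nat.add_sub_cancel] at hcc
        have e1 : t.getD k'' u = t.getD k'' x0 := by
          rw [List.getD_eq_getElem _ _ (by simp only [List.length_cons] at hlen' ⊢; omega),
            List.getD_eq_getElem _ _ (by simp only [List.length_cons] at hlen' ⊢; omega)]
        have e2 : q.support.getD k'' i1 = q.support.getD k'' i2 := by
          rw [List.getD_eq_getElem _ _ (by omega), List.getD_eq_getElem _ _ (by omega)]
        have e3 : q.support.getD (k'' + 1) i1 = q.support.getD (k'' + 1) i2 := by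
          rw [List.getD_eq_getElem _ _ hk'', List.getD_eq_getElem _ _ hk'']
        rw [List.getD_cons_succ, e1, e2, e3]
        exact hcc
    · rw [← happ, pw_cons_cons]
      have hne1 : l1 ≠ [] := fun h0 => by simp [h0] at hh1
      have hl1' : l1.getLast hne1 = x0 := by
        rwa [List.getLast?_eq_getLast hne1, Option.some_inj] at hl1
      have hdec : l1.dropLast ++ [x0] = l1 := by
        rw [← hl1']; exact List.dropLast_append_getLast hne1
      obtain ⟨t2, rfl⟩ : ∃ t2, l2 = x0 :: t2 := by
        cases l2 with
        | nil => exact absurd rfl hne2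
        | cons y2 t2 =>
          simp only [List.head?_cons, Option.some_inj] at hh2
          rw [hh2]; exact ⟨t2, rfl⟩
      have hpw : pathWeight wt (l1 ++ (x0 :: t2).tail) = pathWeight wt l1 * pathWeight wt (x0 :: t2) := by
        rw [← hdec]
        show pathWeight wt (l1.dropLast ++ [x0] ++ t2) = _
        rw [List.append_assoc, List.singleton_append, pw_append]
      rw [hpw]
      have hle1 : pathWeight wt l1 ≤ gdist E wt u x0 := le_gdist E wt ⟨hne1, hh1, hl1, hc1⟩
      exact q_mul_le_mul hdl hdr hle1 hle'

end Key

/-- Let G = (V, E) be a finite weighted directed graph with weights in a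
unital quantale Σ, T a tree decomposition of G, u, v ∈ V, and B_1, …, B_j a simple path
of bags in T such that u ∈ B_1 and v ∈ B_j. Let A be the set of tuples
(x_1, …, x_{j+1}) with x_1 = u, x_{j+1} = v, and x_i ∈ B_{i−1} ∩ B_i for every 1 < i ≤ j.
Then d(u, v) = ⨆_{(x_1,…,x_{j+1}) ∈ A} ⊗_{i=1}^{j} d(x_i, x_{i+1}).
The simple path of bags B_1, …, B_j is given as the support of a simple walk `p` in T,
and a tuple (x_1, …, x_{j+1}) is encoded as a list `xs` of length j+1 (indexed from 0,
so that `xs.getD k u` is x_{k+1} and `p.support.getD k i1` is B_{k+1}); the product of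
consecutive distances along `xs` is `pathWeight (gdist E wt) xs`. -/
theorem stmt_5 {V ι Q : Type*} [Fintype V] [Fintype ι] [CompleteLattice Q] [Monoid Q]
    (hdl : ∀ (a : Q) (S : Set Q), a * sSup S = ⨆ s ∈ S, a * s)
    (hdr : ∀ (a : Q) (S : Set Q), sSup S * a = ⨆ s ∈ S, s * a)
    (E : V → V → Prop) (wt : V → V → Q) (td : TreeDecomp V E ι)
    (u v : V) (i1 ij : ι) (p : td.T.Walk i1 ij) (hp : p.IsPath)
    (hu : u ∈ td.bag i1) (hv : v ∈ td.bag ij) :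
    gdist E wt u v =
      ⨆ xs ∈ {xs : List V |
          xs.length = p.support.length + 1 ∧
          xs.head? = some u ∧ xs.getLast? = some v ∧
          ∀ k, 1 ≤ k → k < p.support.length →
            xs.getD k u ∈ td.bag (p.support.getD (k - 1) i1) ∩ td.bag (p.support.getD k i1)},
        pathWeight (gdist E wt) xs := by
  apply le_antisymm
  · refine iSup₂_le fun l hl => ?_
    obtain ⟨xs, hset, hle⟩ := key_lemma hdl hdr E wt td p hp u v hu hv l hl
    exact le_trans hle
      (le_iSup₂ (f := fun xs (_ : xs ∈ {xs : List V |
          xs.length = p.support.length + 1 ∧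
          xs.head? = some u ∧ xs.getLast? = some v ∧
          ∀ k, 1 ≤ k → k < p.support.length →
            xs.getD k u ∈ td.bag (p.support.getD (k - 1) i1) ∩ td.bag (p.support.getD k i1)}) =>
        pathWeight (gdist E wt) xs) xs hset)
  · refine iSup₂_le fun xs hxs => ?_
    obtain ⟨-, hh, hlast, -⟩ := hxs
    exact pw_le_gdist hdl hdr E wt xs u v hh hlast
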